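/- Braid relation for holonomies (induction step in the proof of Proposition 3). Let Λ be an associative unital ℂ-algebra, n_α, n_β ≥ 1, m ≥ 1. Let U₁, …, U_m ∈ M_{n_α}(Λ) and V₁, …, V_m ∈ M_{n_β}(Λ), and let R, R′ ∈ M_{n_α n_β}(ℂ) be invertible (acting on two slots, the first of size n_α and the second of size n_β). Assume: (a) for every j, R·(U_j)₁·(V_j)₂ = (V_j)₂·(U_j)₁·R′ (same-link exchange relation); (b) for every j < m, (U_j)₁·R⁻¹·(V_{j+1})₂ = (V_{j+1})₂·(U_j)₁; (c) for every j < m, (V_j)₂·R′⁻¹·(U_{j+1})₁ = (U_{j+1})₁·(V_j)₂ (consecutive-link exchange relations); (d) every entry of U_i commutes with every entry of V_j whenever |i−j| ≥ 2 (non-adjacent links commute). Then the holonomies M := U₁U₂⋯U_m and M′ := V₁V₂⋯V_m satisfy R·M₁·M′₂ = M′₂·M₁·R′ in M_{n_α n_β}(Λ). -/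

import Mathlib

/-!
STATEMENT 8: braid relation for holonomies (induction step in the proof of Proposition 3).
Given link matrices U₁,…,U_m, V₁,…,V_m and invertible R, R′ satisfying the same-link,
consecutive-link and non-adjacent commutation relations, the holonomies M = U₁⋯U_m and
M′ = V₁⋯V_m satisfy R·M₁·M′₂ = M′₂·M₁·R′.
-/

open scoped Kronecker
open Matrix

section
variable {Λ : Type*} [Ring Λ] {nα nβ : ℕ}

lemma kron1_mul (A A' : Matrix (Fin nα) (Fin nα) Λ) :
    (A * A') ⊗ₖ (1 : Matrix (Fin nβ) (Fin nβ) Λ)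
      = (A ⊗ₖ (1 : Matrix (Fin nβ) (Fin nβ) Λ)) * (A' ⊗ₖ (1 : Matrix (Fin nβ) (Fin nβ) Λ)) := by
  ext ⟨i, r⟩ ⟨k, s⟩
  simp [Matrix.mul_apply, Matrix.one_apply, Fintype.sum_prod_type,
    mul_ite, ite_mul, Finset.sum_ite_eq, Finset.sum_mul, Finset.mul_sum]

lemma kron2_mul (B B' : Matrix (Fin nβ) (Fin nβ) Λ) :
    (1 : Matrix (Fin nα) (Fin nα) Λ) ⊗ₖ (B * B')
      = ((1 : Matrix (Fin nα) (Fin nα) Λ) ⊗ₖ B) * ((1 : Matrix (Fin nα) (Fin nα) Λ) ⊗ₖ B') := by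
  ext ⟨i, r⟩ ⟨k, s⟩
  simp [Matrix.mul_apply, Matrix.one_apply, Fintype.sum_prod_type,
    mul_ite, ite_mul, Finset.sum_ite_eq, Finset.sum_mul, Finset.mul_sum]

lemma kron_commute (A : Matrix (Fin nα) (Fin nα) Λ) (B : Matrix (Fin nβ) (Fin nβ) Λ)
    (h : ∀ p q r s, Commute (A p q) (B r s)) :
    Commute (A ⊗ₖ (1 : Matrix (Fin nβ) (Fin nβ) Λ)) ((1 : Matrix (Fin nα) (Fin nα) Λ) ⊗ₖ B) := by
  unfold Commute SemiconjBy
  ext ⟨i, r⟩ ⟨k, s⟩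
  simp [Matrix.mul_apply, Matrix.one_apply, Fintype.sum_prod_type,
    mul_ite, ite_mul, Finset.sum_ite_eq, Finset.sum_mul, Finset.mul_sum]
  exact h i k r s

lemma prod_kron1 (l : List (Matrix (Fin nα) (Fin nα) Λ)) :
    l.prod ⊗ₖ (1 : Matrix (Fin nβ) (Fin nβ) Λ)
      = (l.map (fun A => A ⊗ₖ (1 : Matrix (Fin nβ) (Fin nβ) Λ))).prod := by
  induction l with
  | nil => simp
  | cons a t ih => simp [kron1_mul, ih]

lemma prod_kron2 (l : List (Matrix (Fin nβ) (Fin nβ) Λ)) :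
    (1 : Matrix (Fin nα) (Fin nα) Λ) ⊗ₖ l.prod
      = (l.map (fun B => (1 : Matrix (Fin nα) (Fin nα) Λ) ⊗ₖ B)).prod := by
  induction l with
  | nil => simp
  | cons a t ih => simp [kron2_mul, ih]

end

lemma braid_aux {Λ : Type*} [Ring Λ] [Algebra ℂ Λ] {nα nβ : ℕ}
    (R R' Rinv R'inv : Matrix (Fin nα × Fin nβ) (Fin nα × Fin nβ) ℂ)
    (hRinv' : Rinv * R = 1) (hR'inv : R' * R'inv = 1) :
    ∀ (k : ℕ) (U : ℕ → Matrix (Fin nα) (Fin nα) Λ) (V : ℕ → Matrix (Fin nβ) (Fin nβ) Λ),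
    (∀ j, j ≤ k → R.map (algebraMap ℂ Λ) * (U j ⊗ₖ (1 : Matrix (Fin nβ) (Fin nβ) Λ)) *
        ((1 : Matrix (Fin nα) (Fin nα) Λ) ⊗ₖ V j)
      = ((1 : Matrix (Fin nα) (Fin nα) Λ) ⊗ₖ V j) *
        (U j ⊗ₖ (1 : Matrix (Fin nβ) (Fin nβ) Λ)) * R'.map (algebraMap ℂ Λ)) →
    (∀ j, j + 1 ≤ k → (U j ⊗ₖ (1 : Matrix (Fin nβ) (Fin nβ) Λ)) * Rinv.map (algebraMap ℂ Λ) *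
        ((1 : Matrix (Fin nα) (Fin nα) Λ) ⊗ₖ V (j+1))
      = ((1 : Matrix (Fin nα) (Fin nα) Λ) ⊗ₖ V (j+1)) *
        (U j ⊗ₖ (1 : Matrix (Fin nβ) (Fin nβ) Λ))) →
    (∀ j, j + 1 ≤ k → ((1 : Matrix (Fin nα) (Fin nα) Λ) ⊗ₖ V j) * R'inv.map (algebraMap ℂ Λ) *
        (U (j+1) ⊗ₖ (1 : Matrix (Fin nβ) (Fin nβ) Λ))
      = (U (j+1) ⊗ₖ (1 : Matrix (Fin nβ) (Fin nβ) Λ)) *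
        ((1 : Matrix (Fin nα) (Fin nα) Λ) ⊗ₖ V j)) →
    (∀ i j, i ≤ k → j ≤ k → (i + 2 ≤ j ∨ j + 2 ≤ i) →
      ∀ p q r s, Commute (U i p q) (V j r s)) →
    R.map (algebraMap ℂ Λ) *
        (((List.range (k+1)).map U).prod ⊗ₖ (1 : Matrix (Fin nβ) (Fin nβ) Λ)) *
        ((1 : Matrix (Fin nα) (Fin nα) Λ) ⊗ₖ ((List.range (k+1)).map V).prod)
      = ((1 : Matrix (Fin nα) (Fin nα) Λ) ⊗ₖ ((List.range (k+1)).map V).prod) *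
        (((List.range (k+1)).map U).prod ⊗ₖ (1 : Matrix (Fin nβ) (Fin nβ) Λ)) *
        R'.map (algebraMap ℂ Λ) := by
  intro k
  induction k with
  | zero =>
    intro U V ha _ _ _
    simpa [List.range_succ] using ha 0 le_rfl
  | succ k IH =>
    intro U V ha hb hc hd
    set Rm := R.map (algebraMap ℂ Λ) with hRm
    set R'm := R'.map (algebraMap ℂ Λ) with hR'm
    set Rim := Rinv.map (algebraMap ℂ Λ) with hRim
    set R'im := R'inv.map (algebraMap ℂ Λ) with hR'im
    have hmap1 : Rim * Rm = 1 := by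
      rw [hRm, hRim, ← Matrix.map_mul, hRinv', Matrix.map_one _ (map_zero _) (map_one _)]
    have hmap2 : R'm * R'im = 1 := by
      rw [hR'm, hR'im, ← Matrix.map_mul, hR'inv, Matrix.map_one _ (map_zero _) (map_one _)]
    -- decompose products
    have hrange : List.range (k+2) = 0 :: (List.range (k+1)).map Nat.succ :=
      List.range_succ_eq_map
    have hrange' : List.range (k+1) = 0 :: (List.range k).map Nat.succ :=
      List.range_succ_eq_map
    set Q : Matrix (Fin nα) (Fin nα) Λ := ((List.range (k+1)).map (fun j => U (j+1))).prod with hQ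
    set Q' : Matrix (Fin nβ) (Fin nβ) Λ := ((List.range (k+1)).map (fun j => V (j+1))).prod with hQ'
    have hPU : ((List.range (k+2)).map U).prod = U 0 * Q := by
      rw [hrange, hQ]; simp [List.map_map, Function.comp_def, Nat.succ_eq_add_one]
    have hPV : ((List.range (k+2)).map V).prod = V 0 * Q' := by
      rw [hrange, hQ']; simp [List.map_map, Function.comp_def, Nat.succ_eq_add_one]
    set A := U 0 ⊗ₖ (1 : Matrix (Fin nβ) (Fin nβ) Λ) with hA
    set B := (1 : Matrix (Fin nα) (Fin nα) Λ) ⊗ₖ V 0 with hB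
    set W := Q ⊗ₖ (1 : Matrix (Fin nβ) (Fin nβ) Λ) with hW
    set N := (1 : Matrix (Fin nα) (Fin nα) Λ) ⊗ₖ Q' with hN
    -- induction hypothesis for the shifted families
    have hIH : Rm * W * N = N * W * R'm := by
      apply IH (fun j => U (j+1)) (fun j => V (j+1))
      · intro j hj; exact ha (j+1) (by omega)
      · intro j hj; exact hb (j+1) (by omega)
      · intro j hj; exact hc (j+1) (by omega)
      · intro i j hi hj hij p q r s; exact hd (i+1) (j+1) (by omega) (by omega) (by omega) p q r s
    -- e1 : W * B = B * (R'im * W)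
    have e1 : W * B = B * (R'im * W) := by
      have hQdec : Q = U 1 * ((List.range k).map (fun j => U (j+2))).prod := by
        rw [hQ, hrange']; simp [List.map_map, Function.comp_def, Nat.succ_eq_add_one]
      have hcomm : Commute B (((List.range k).map (fun j => U (j+2))).prod ⊗ₖ (1 : Matrix (Fin nβ) (Fin nβ) Λ)) := by
        rw [prod_kron1]
        apply Commute.list_prod_right
        intro x hx
        simp only [List.map_map, List.mem_map, List.mem_range, Function.comp_def] at hx
        obtain ⟨j, hj, rfl⟩ := hx
        exact ((kron_commute (U (j+2)) (V 0)) (fun p q r s =>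
          (hd (j+2) 0 (by omega) (by omega) (by omega) p q r s))).symm
      have hc1 : (U 1 ⊗ₖ (1 : Matrix (Fin nβ) (Fin nβ) Λ)) * B = B * R'im * (U 1 ⊗ₖ (1 : Matrix (Fin nβ) (Fin nβ) Λ)) := by
        rw [← hc 0 (by omega)]
      calc W * B
          = (U 1 ⊗ₖ (1 : Matrix (Fin nβ) (Fin nβ) Λ)) *
              ((((List.range k).map (fun j => U (j+2))).prod ⊗ₖ (1 : Matrix (Fin nβ) (Fin nβ) Λ)) * B) := by
            rw [hW, hQdec, kron1_mul, mul_assoc]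
        _ = (U 1 ⊗ₖ (1 : Matrix (Fin nβ) (Fin nβ) Λ)) * B *
              (((List.range k).map (fun j => U (j+2))).prod ⊗ₖ (1 : Matrix (Fin nβ) (Fin nβ) Λ)) := by
            rw [← hcomm.eq, mul_assoc]
        _ = B * R'im * ((U 1 ⊗ₖ (1 : Matrix (Fin nβ) (Fin nβ) Λ)) *
              (((List.range k).map (fun j => U (j+2))).prod ⊗ₖ (1 : Matrix (Fin nβ) (Fin nβ) Λ))) := by
            rw [hc1]; simp only [mul_assoc]
        _ = B * (R'im * W) := by rw [hW, hQdec, kron1_mul]; simp only [mul_assoc]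
    -- e2 : A * (Rim * N) = N * A
    have e2 : A * (Rim * N) = N * A := by
      have hQ'dec : Q' = V 1 * ((List.range k).map (fun j => V (j+2))).prod := by
        rw [hQ', hrange']; simp [List.map_map, Function.comp_def, Nat.succ_eq_add_one]
      have hcomm : Commute A ((1 : Matrix (Fin nα) (Fin nα) Λ) ⊗ₖ ((List.range k).map (fun j => V (j+2))).prod) := by
        rw [prod_kron2]
        apply Commute.list_prod_right
        intro x hx
        simp only [List.map_map, List.mem_map, List.mem_range, Function.comp_def] at hx
        obtain ⟨j, hj, rfl⟩ := hx
        exact kron_commute (U 0) (V (j+2)) (fun p q r s =>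
          hd 0 (j+2) (by omega) (by omega) (by omega) p q r s)
      have hb1 : A * Rim * ((1 : Matrix (Fin nα) (Fin nα) Λ) ⊗ₖ V 1)
          = ((1 : Matrix (Fin nα) (Fin nα) Λ) ⊗ₖ V 1) * A := hb 0 (by omega)
      calc A * (Rim * N)
          = A * Rim * ((1 : Matrix (Fin nα) (Fin nα) Λ) ⊗ₖ V 1) *
              ((1 : Matrix (Fin nα) (Fin nα) Λ) ⊗ₖ ((List.range k).map (fun j => V (j+2))).prod) := by
            rw [hN, hQ'dec, kron2_mul]; simp only [mul_assoc]
        _ = ((1 : Matrix (Fin nα) (Fin nα) Λ) ⊗ₖ V 1) *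
              (A * ((1 : Matrix (Fin nα) (Fin nα) Λ) ⊗ₖ ((List.range k).map (fun j => V (j+2))).prod)) := by
            rw [hb1]; simp only [mul_assoc]
        _ = ((1 : Matrix (Fin nα) (Fin nα) Λ) ⊗ₖ V 1) *
              (((1 : Matrix (Fin nα) (Fin nα) Λ) ⊗ₖ ((List.range k).map (fun j => V (j+2))).prod) * A) := by
            rw [hcomm.eq]
        _ = N * A := by rw [hN, hQ'dec, kron2_mul]; simp only [mul_assoc]
    -- e3 : same-link for index 0
    have e3 : Rm * A * B = B * A * R'm := ha 0 (by omega)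
    -- e5 : W * N = Rim * (N * (W * R'm))
    have e5 : W * N = Rim * (N * (W * R'm)) := by
      have := hIH
      calc W * N = Rim * Rm * (W * N) := by rw [hmap1, one_mul]
        _ = Rim * (Rm * W * N) := by simp only [mul_assoc]
        _ = Rim * (N * W * R'm) := by rw [hIH]
        _ = Rim * (N * (W * R'm)) := by simp only [mul_assoc]
    -- main computation
    rw [hPU, hPV, kron1_mul, kron2_mul, ← hA, ← hB, ← hW, ← hN]
    calc Rm * (A * W) * (B * N)
        = Rm * A * (W * B) * N := by simp only [mul_assoc]
      _ = Rm * A * (B * (R'im * W)) * N := by rw [e1]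
      _ = Rm * A * B * (R'im * (W * N)) := by simp only [mul_assoc]
      _ = B * A * R'm * (R'im * (W * N)) := by rw [e3]
      _ = B * A * (R'm * R'im) * (W * N) := by simp only [mul_assoc]
      _ = B * (A * (W * N)) := by rw [hmap2, mul_one]; simp only [mul_assoc]
      _ = B * (A * (Rim * (N * (W * R'm)))) := by rw [e5]
      _ = B * (A * (Rim * N) * (W * R'm)) := by simp only [mul_assoc]
      _ = B * (N * A * (W * R'm)) := by rw [e2]
      _ = B * N * (A * W) * R'm := by simp only [mul_assoc]

theorem holonomy_braid_relation
    {Λ : Type*} [Ring Λ] [Algebra ℂ Λ]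
    (nα nβ m : ℕ) (hnα : 1 ≤ nα) (hnβ : 1 ≤ nβ) (hm : 1 ≤ m)
    (U : Fin m → Matrix (Fin nα) (Fin nα) Λ)
    (V : Fin m → Matrix (Fin nβ) (Fin nβ) Λ)
    (R R' Rinv R'inv : Matrix (Fin nα × Fin nβ) (Fin nα × Fin nβ) ℂ)
    (hRinv : R * Rinv = 1) (hRinv' : Rinv * R = 1)
    (hR'inv : R' * R'inv = 1) (hR'inv' : R'inv * R' = 1)
    -- (a) same-link exchange relation
    (ha : ∀ j : Fin m,
      R.map (algebraMap ℂ Λ) * (U j ⊗ₖ (1 : Matrix (Fin nβ) (Fin nβ) Λ)) *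
          ((1 : Matrix (Fin nα) (Fin nα) Λ) ⊗ₖ V j) =
        ((1 : Matrix (Fin nα) (Fin nα) Λ) ⊗ₖ V j) *
          (U j ⊗ₖ (1 : Matrix (Fin nβ) (Fin nβ) Λ)) * R'.map (algebraMap ℂ Λ))
    -- (b) consecutive-link exchange relation
    (hb : ∀ i j : Fin m, (i : ℕ) + 1 = (j : ℕ) →
      (U i ⊗ₖ (1 : Matrix (Fin nβ) (Fin nβ) Λ)) * Rinv.map (algebraMap ℂ Λ) *
          ((1 : Matrix (Fin nα) (Fin nα) Λ) ⊗ₖ V j) =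
        ((1 : Matrix (Fin nα) (Fin nα) Λ) ⊗ₖ V j) *
          (U i ⊗ₖ (1 : Matrix (Fin nβ) (Fin nβ) Λ)))
    -- (c) consecutive-link exchange relation
    (hc : ∀ i j : Fin m, (i : ℕ) + 1 = (j : ℕ) →
      ((1 : Matrix (Fin nα) (Fin nα) Λ) ⊗ₖ V i) * R'inv.map (algebraMap ℂ Λ) *
          (U j ⊗ₖ (1 : Matrix (Fin nβ) (Fin nβ) Λ)) =
        (U j ⊗ₖ (1 : Matrix (Fin nβ) (Fin nβ) Λ)) *
          ((1 : Matrix (Fin nα) (Fin nα) Λ) ⊗ₖ V i))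
    -- (d) non-adjacent links commute entrywise
    (hd : ∀ i j : Fin m, ((i : ℕ) + 2 ≤ (j : ℕ) ∨ (j : ℕ) + 2 ≤ (i : ℕ)) →
      ∀ (p q : Fin nα) (r s : Fin nβ), Commute (U i p q) (V j r s)) :
    R.map (algebraMap ℂ Λ) *
        (((List.finRange m).map U).prod ⊗ₖ (1 : Matrix (Fin nβ) (Fin nβ) Λ)) *
        ((1 : Matrix (Fin nα) (Fin nα) Λ) ⊗ₖ ((List.finRange m).map V).prod) =
      ((1 : Matrix (Fin nα) (Fin nα) Λ) ⊗ₖ ((List.finRange m).map V).prod) *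
        (((List.finRange m).map U).prod ⊗ₖ (1 : Matrix (Fin nβ) (Fin nβ) Λ)) *
        R'.map (algebraMap ℂ Λ) := by
  obtain ⟨k, rfl⟩ : ∃ k, m = k + 1 := ⟨m - 1, by omega⟩
  have hlistU : (List.finRange (k+1)).map U
      = (List.range (k+1)).map (fun j => if h : j < k + 1 then U ⟨j, h⟩ else 1) := by
    apply List.ext_getElem
    · simp
    · intro n h1 h2
      simp only [List.getElem_map, List.getElem_finRange, List.getElem_range]
      rw [dif_pos (by simpa using h1)]
      rfl
  have hlistV : (List.finRange (k+1)).map V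
      = (List.range (k+1)).map (fun j => if h : j < k + 1 then V ⟨j, h⟩ else 1) := by
    apply List.ext_getElem
    · simp
    · intro n h1 h2
      simp only [List.getElem_map, List.getElem_finRange, List.getElem_range]
      rw [dif_pos (by simpa using h1)]
      rfl
  rw [hlistU, hlistV]
  refine braid_aux R R' Rinv R'inv hRinv' hR'inv k _ _ ?_ ?_ ?_ ?_
  · intro j hj
    have hj' : j < k + 1 := by omega
    simpa only [dif_pos hj'] using ha ⟨j, hj'⟩
  · intro j hj
    have hj' : j < k + 1 := by omega
    have hj'' : j + 1 < k + 1 := by omega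
    simpa only [dif_pos hj', dif_pos hj''] using hb ⟨j, hj'⟩ ⟨j+1, hj''⟩ rfl
  · intro j hj
    have hj' : j < k + 1 := by omega
    have hj'' : j + 1 < k + 1 := by omega
    simpa only [dif_pos hj', dif_pos hj''] using hc ⟨j, hj'⟩ ⟨j+1, hj''⟩ rfl
  · intro i j hi hj hij p q r s
    have hi' : i < k + 1 := by omega
    have hj' : j < k + 1 := by omega
    simpa only [dif_pos hi', dif_pos hj'] using
      hd ⟨i, hi'⟩ ⟨j, hj'⟩ (by simpa using hij) p q r s
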